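/- Let b' be a nondegenerate symmetric bilinear form of split signature (u,u) on V' and b'' any nondegenerate symmetric bilinear form on V''. Then b' ⊗ b'' on V' ⊗ V'' has split signature (t,t) where 2t = dim(V' ⊗ V''). -/

import Mathlib

open TensorProduct

/-- A real bilinear form `B` on `V` has signature `(p,q)` if `V` splits as an orthogonal
direct sum of a `p`-dimensional subspace on which `B` is positive definite and a
`q`-dimensional subspace on which `B` is negative definite. -/
def HasSignature {V : Type*} [AddCommGroup V] [Module ℝ V]
    (B : V → V → ℝ) (p q : ℕ) : Prop :=
  ∃ P N : Submodule ℝ V, IsCompl P N ∧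
    (∀ x ∈ P, ∀ y ∈ N, B x y = 0) ∧ (∀ y ∈ N, ∀ x ∈ P, B y x = 0) ∧
    (∀ x ∈ P, x ≠ 0 → 0 < B x x) ∧ (∀ x ∈ N, x ≠ 0 → B x x < 0) ∧
    Module.finrank ℝ P = p ∧ Module.finrank ℝ N = q

/-- If `b'` is a nondegenerate symmetric bilinear form of split signature `(u,u)` and `b''`
any nondegenerate symmetric bilinear form, then `b' ⊗ b''` has split signature `(t,t)`
where `2t = dim (V' ⊗ V'')`. -/
theorem tensor_with_split_is_split {V W : Type*}
    [AddCommGroup V] [Module ℝ V] [AddCommGroup W] [Module ℝ W]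
    [FiniteDimensional ℝ V] [FiniteDimensional ℝ W]
    (b' : LinearMap.BilinForm ℝ V) (b'' : LinearMap.BilinForm ℝ W)
    (hs' : ∀ x y, b' x y = b' y x) (hs'' : ∀ x y, b'' x y = b'' y x)
    (hn' : b'.Nondegenerate) (hn'' : b''.Nondegenerate)
    (u : ℕ) (hsig' : HasSignature (fun x y => b' x y) u u) :
    ∃ t : ℕ, 2 * t = Module.finrank ℝ (V ⊗[ℝ] W) ∧
      HasSignature (fun x y => (b'.tmul b'') x y) t t := by
  classical
  obtain ⟨P, N, hPN, hPNo, hNPo, hPpos, hNneg, hdP, hdN⟩ := hsig'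
  simp only at hPNo hNPo hPpos hNneg
  -- an orthogonal basis for `b''`
  obtain ⟨f, hf⟩ := LinearMap.BilinForm.exists_orthogonal_basis
    (B := b'') ⟨fun x y => hs'' x y⟩
  set d : Fin (Module.finrank ℝ W) → ℝ := fun j => b'' (f j) (f j) with hdd
  have hd : ∀ j, d j ≠ 0 := fun j h =>
    hf.not_isOrtho_basis_self_of_separatingLeft hn''.1 j h
  -- dual functionals
  set φ : Fin (Module.finrank ℝ W) → (W →ₗ[ℝ] ℝ) := fun j => (d j)⁻¹ • (b'' (f j)) with hφdef
  have hφ : ∀ j k, φ j (f k) = if j = k then 1 else 0 := by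
    intro j k
    by_cases h : j = k
    · subst h
      simp [hφdef, hdd, inv_mul_cancel₀ (hd j)]
      exact inv_mul_cancel₀ (hd j)
    · simp only [hφdef, LinearMap.smul_apply, smul_eq_mul, if_neg h]
      rw [show (b'' (f j)) (f k) = 0 from hf h, mul_zero]
  -- coordinate maps
  set c : Fin (Module.finrank ℝ W) → (V ⊗[ℝ] W →ₗ[ℝ] V) := fun j =>
    (TensorProduct.rid ℝ V).toLinearMap ∘ₗ LinearMap.lTensor V (φ j) with hcdef
  have hc : ∀ j (v : V) (w : W), c j (v ⊗ₜ[ℝ] w) = φ j w • v := by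
    intro j v w
    simp [hcdef]
  -- the reconstruction identity
  have hsum : ∀ x : V ⊗[ℝ] W, ∑ j, (c j x) ⊗ₜ[ℝ] f j = x := by
    have hL : (∑ j, (TensorProduct.mk ℝ V W).flip (f j) ∘ₗ c j) = LinearMap.id := by
      apply TensorProduct.ext'
      intro v w
      simp only [LinearMap.sum_apply, LinearMap.coe_comp, Function.comp_apply,
        LinearMap.flip_apply, TensorProduct.mk_apply, LinearMap.id_apply, hc]
      have h1 : ∀ j : Fin (Module.finrank ℝ W), (φ j w • v) ⊗ₜ[ℝ] f j = v ⊗ₜ[ℝ] (φ j w • f j) := by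
        intro j; rw [TensorProduct.smul_tmul]
      rw [Finset.sum_congr rfl fun j _ => h1 j, ← TensorProduct.tmul_sum]
      congr 1
      -- ∑ j, φ j w • f j = w
      have hid : (∑ j, LinearMap.toSpanSingleton ℝ W (f j) ∘ₗ (φ j)) = LinearMap.id := by
        apply f.ext
        intro k
        simp only [LinearMap.sum_apply, LinearMap.coe_comp, Function.comp_apply,
          LinearMap.toSpanSingleton_apply, LinearMap.id_apply, hφ]
        simp
      have := LinearMap.congr_fun hid w
      simpa using this
    intro x
    have := LinearMap.congr_fun hL x
    simpa using this
  -- the two halves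
  set S : Fin (Module.finrank ℝ W) → Submodule ℝ V := fun j => if 0 < d j then P else N with hS
  set T : Fin (Module.finrank ℝ W) → Submodule ℝ V := fun j => if 0 < d j then N else P with hT
  have hdneg : ∀ j, ¬ (0 < d j) → d j < 0 := fun j h =>
    lt_of_le_of_ne (not_lt.1 h) (hd j)
  have hSpos : ∀ j, ∀ v ∈ S j, v ≠ 0 → 0 < d j * b' v v := by
    intro j v hv hv0
    by_cases h : 0 < d j
    · simp only [hS, if_pos h] at hv
      exact mul_pos h (hPpos v hv hv0)
    · simp only [hS, if_neg h] at hv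
      exact mul_pos_of_neg_of_neg (hdneg j h) (hNneg v hv hv0)
  have hSnonneg : ∀ j, ∀ v ∈ S j, 0 ≤ d j * b' v v := by
    intro j v hv
    rcases eq_or_ne v 0 with rfl | h
    · simp
    · exact le_of_lt (hSpos j v hv h)
  have hTneg : ∀ j, ∀ v ∈ T j, v ≠ 0 → d j * b' v v < 0 := by
    intro j v hv hv0
    by_cases h : 0 < d j
    · simp only [hT, if_pos h] at hv
      exact mul_neg_of_pos_of_neg h (hNneg v hv hv0)
    · simp only [hT, if_neg h] at hv
      exact mul_neg_of_neg_of_pos (hdneg j h) (hPpos v hv hv0)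
  have hTnonpos : ∀ j, ∀ v ∈ T j, d j * b' v v ≤ 0 := by
    intro j v hv
    rcases eq_or_ne v 0 with rfl | h
    · simp
    · exact le_of_lt (hTneg j v hv h)
  have hSTo : ∀ j, ∀ v ∈ S j, ∀ w ∈ T j, b' v w = 0 := by
    intro j v hv w hw
    by_cases h : 0 < d j
    · simp only [hS, hT, if_pos h] at hv hw
      exact hPNo v hv w hw
    · simp only [hS, hT, if_neg h] at hv hw
      exact hNPo v hv w hw
  have hTSo : ∀ j, ∀ v ∈ T j, ∀ w ∈ S j, b' v w = 0 := by
    intro j v hv w hw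
    rw [hs' v w]
    exact hSTo j w hw v hv
  -- generic construction: a subspace from a family of submodules of V
  have key : ∀ σ : Fin (Module.finrank ℝ W) → Submodule ℝ V,
      ∃ PT : Submodule ℝ (V ⊗[ℝ] W),
        (∀ x ∈ PT, ∀ j, c j x ∈ σ j) ∧
        (∀ j, ∀ v ∈ σ j, v ⊗ₜ[ℝ] f j ∈ PT) ∧
        Module.finrank ℝ PT = ∑ j, Module.finrank ℝ (σ j) := by
    intro σ
    set Φ : (∀ j, σ j) →ₗ[ℝ] V ⊗[ℝ] W :=
      ∑ j, (TensorProduct.mk ℝ V W).flip (f j) ∘ₗ (σ j).subtype ∘ₗ LinearMap.proj j with hΦ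
    have hΦapp : ∀ g : (∀ j, σ j), Φ g = ∑ j, ((g j : V) ⊗ₜ[ℝ] f j) := by
      intro g
      simp [hΦ]
    have hcΦ : ∀ (g : (∀ j, σ j)) (k : Fin (Module.finrank ℝ W)), c k (Φ g) = (g k : V) := by
      intro g k
      rw [hΦapp, map_sum]
      rw [Finset.sum_congr rfl (fun j _ => hc k (g j : V) (f j))]
      rw [Finset.sum_congr rfl (fun j _ => by rw [hφ k j])]
      simp
    have hinj : Function.Injective Φ := by
      rw [← LinearMap.ker_eq_bot, eq_bot_iff]
      intro g hg
      simp only [LinearMap.mem_ker] at hg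
      have h0 : ∀ k, (g k : V) = 0 := by
        intro k
        rw [← hcΦ g k, hg, map_zero]
      have : g = 0 := funext fun k => Subtype.ext (h0 k)
      simp [this]
    refine ⟨LinearMap.range Φ, ?_, ?_, ?_⟩
    · rintro x ⟨g, rfl⟩ j
      rw [hcΦ]
      exact (g j).2
    · intro j v hv
      refine ⟨Pi.single j ⟨v, hv⟩, ?_⟩
      rw [hΦapp]
      rw [Finset.sum_eq_single j]
      · rw [Pi.single_eq_same]
      · intro k _ hk
        rw [Pi.single_eq_of_ne hk]
        simp
      · intro h
        exact absurd (Finset.mem_univ j) h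
    · rw [LinearMap.finrank_range_of_inj hinj, Module.finrank_pi_fintype]
  obtain ⟨PT, hPTc, hPTgen, hPTrank⟩ := key S
  obtain ⟨NT, hNTc, hNTgen, hNTrank⟩ := key T
  -- the formula for the tensor form
  have hB : ∀ x y : V ⊗[ℝ] W,
      (b'.tmul b'') x y = ∑ j, d j * b' (c j x) (c j y) := by
    intro x y
    conv_lhs => rw [← hsum x, ← hsum y]
    simp only [map_sum, LinearMap.sum_apply, LinearMap.BilinForm.tensorDistrib_tmul,
      smul_eq_mul]
    refine Finset.sum_congr rfl fun k _ => ?_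
    rw [Finset.sum_eq_single k]
    · intro j _ hj
      rw [show (b'' (f j)) (f k) = 0 from hf hj, zero_mul]
    · intro h
      exact absurd (Finset.mem_univ k) h
  -- positivity / negativity
  have hnonzero : ∀ x : V ⊗[ℝ] W, x ≠ 0 → ∃ j, c j x ≠ 0 := by
    intro x hx0
    by_contra h
    push_neg at h
    apply hx0
    rw [← hsum x]
    refine Finset.sum_eq_zero fun j _ => ?_
    rw [h j, TensorProduct.zero_tmul]
  have hPTpos : ∀ x ∈ PT, x ≠ 0 → 0 < (b'.tmul b'') x x := by
    intro x hx hx0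
    rw [hB]
    obtain ⟨j, hj⟩ := hnonzero x hx0
    refine Finset.sum_pos' (fun k _ => hSnonneg k _ (hPTc x hx k)) ?_
    exact ⟨j, Finset.mem_univ j, hSpos j _ (hPTc x hx j) hj⟩
  have hNTneg : ∀ x ∈ NT, x ≠ 0 → (b'.tmul b'') x x < 0 := by
    intro x hx hx0
    rw [hB]
    obtain ⟨j, hj⟩ := hnonzero x hx0
    have := Finset.sum_lt_sum (f := fun k => d k * b' (c k x) (c k x))
      (g := fun _ => (0 : ℝ))
      (fun k _ => hTnonpos k _ (hNTc x hx k))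
      ⟨j, Finset.mem_univ j, hTneg j _ (hNTc x hx j) hj⟩
    simpa using this
  -- orthogonality
  have hortho1 : ∀ x ∈ PT, ∀ y ∈ NT, (b'.tmul b'') x y = 0 := by
    intro x hx y hy
    rw [hB]
    refine Finset.sum_eq_zero fun j _ => ?_
    rw [hSTo j _ (hPTc x hx j) _ (hNTc y hy j), mul_zero]
  have hortho2 : ∀ y ∈ NT, ∀ x ∈ PT, (b'.tmul b'') y x = 0 := by
    intro y hy x hx
    rw [hB]
    refine Finset.sum_eq_zero fun j _ => ?_
    rw [hTSo j _ (hNTc y hy j) _ (hPTc x hx j), mul_zero]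
  -- complementarity
  have hcompl : IsCompl PT NT := by
    constructor
    · rw [Submodule.disjoint_def]
      intro x hxP hxN
      by_contra hx0
      exact absurd (hPTpos x hxP hx0) (not_lt.2 (le_of_lt (hNTneg x hxN hx0)))
    · rw [codisjoint_iff, eq_top_iff]
      intro x _
      rw [← hsum x]
      refine Submodule.sum_mem _ fun j _ => ?_
      have hcx : c j x ∈ P ⊔ N := by
        rw [hPN.codisjoint.eq_top]
        trivial
      rw [Submodule.mem_sup] at hcx
      obtain ⟨p, hp, q, hq, hpq⟩ := hcx
      rw [← hpq, TensorProduct.add_tmul]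
      refine add_mem ?_ ?_
      · by_cases h : 0 < d j
        · exact Submodule.mem_sup_left (hPTgen j p (by simp only [hS, if_pos h]; exact hp))
        · exact Submodule.mem_sup_right (hNTgen j p (by simp only [hT, if_neg h]; exact hp))
      · by_cases h : 0 < d j
        · exact Submodule.mem_sup_right (hNTgen j q (by simp only [hT, if_pos h]; exact hq))
        · exact Submodule.mem_sup_left (hPTgen j q (by simp only [hS, if_neg h]; exact hq))
  -- dimensions
  have hSrank : ∀ j, Module.finrank ℝ (S j) = u := by
    intro j
    by_cases h : 0 < d j
    · have e : S j = P := by rw [hS]; exact if_pos h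
      rw [e]; exact hdP
    · have e : S j = N := by rw [hS]; exact if_neg h
      rw [e]; exact hdN
  have hTrank : ∀ j, Module.finrank ℝ (T j) = u := by
    intro j
    by_cases h : 0 < d j
    · have e : T j = N := by rw [hT]; exact if_pos h
      rw [e]; exact hdN
    · have e : T j = P := by rw [hT]; exact if_neg h
      rw [e]; exact hdP
  have hPTr : Module.finrank ℝ PT = Module.finrank ℝ W * u := by
    rw [hPTrank, Finset.sum_congr rfl fun j _ => hSrank j]
    simp [mul_comm]
  have hNTr : Module.finrank ℝ NT = Module.finrank ℝ W * u := by
    rw [hNTrank, Finset.sum_congr rfl fun j _ => hTrank j]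
    simp [mul_comm]
  have hV : Module.finrank ℝ V = u + u := by
    rw [← Submodule.finrank_add_eq_of_isCompl hPN, hdP, hdN]
  refine ⟨Module.finrank ℝ W * u, ?_, PT, NT, hcompl, hortho1, hortho2, hPTpos, hNTneg,
    hPTr, hNTr⟩
  rw [Module.finrank_tensorProduct, hV]
  ring
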